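/- Let p be a degree-3 polynomial with integer coefficients, irreducible over ℚ, with (necessarily distinct) roots α, β, γ ∈ ℂ, and let q be a degree-2 polynomial with integer coefficients and nonzero leading coefficient. Then there exists a 3×3 integer matrix M whose characteristic polynomial is irreducible over ℚ such that each of the three vectors ξ = (1, α, q(α)), ν = (1, β, q(β)), μ = (1, γ, q(γ)) is an eigenvector of M. -/
import Mathlib

open Polynomial Matrix

/-- **Triples of cubic conjugate vectors come from an integer matrix.**
Let `p` be a degree-3 integer polynomial, irreducible over `ℚ`, with (necessarily distinct)
roots `α, β, γ ∈ ℂ`, and let `q` be a degree-2 integer polynomial (its leading coefficient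
is nonzero). Then there exists a `3 × 3` integer matrix `M` whose characteristic polynomial
is irreducible over `ℚ` such that each of the vectors `(1, τ, q(τ))` for `τ ∈ {α, β, γ}` is
an eigenvector of `M`. -/
theorem exists_integer_matrix_with_conjugate_eigenvectors
    (p q : Polynomial ℤ)
    (hp : p.degree = 3)
    (hirr : Irreducible (p.map (Int.castRingHom ℚ)))
    (α β γ : ℂ)
    (hα : Polynomial.aeval α p = 0) (hβ : Polynomial.aeval β p = 0)
    (hγ : Polynomial.aeval γ p = 0)
    (hαβ : α ≠ β) (hαγ : α ≠ γ) (hβγ : β ≠ γ)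
    (hq : q.degree = 2) :
    ∃ M : Matrix (Fin 3) (Fin 3) ℤ,
      Irreducible (M.charpoly.map (Int.castRingHom ℚ)) ∧
      ∀ τ ∈ ({α, β, γ} : Set ℂ),
        ![1, τ, Polynomial.aeval τ q] ≠ 0 ∧
        ∃ lam : ℂ,
          (M.map (Int.cast : ℤ → ℂ)).mulVec ![1, τ, Polynomial.aeval τ q] =
            lam • ![1, τ, Polynomial.aeval τ q] := by
  have hpnd : p.natDegree = 3 := natDegree_eq_of_degree_eq_some hp
  have hqnd : q.natDegree = 2 := natDegree_eq_of_degree_eq_some hq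
  set a := p.coeff 3 with ha_def
  set b := p.coeff 2 with hb_def
  set c := p.coeff 1 with hc_def
  set d := p.coeff 0 with hd_def
  set e := q.coeff 2 with he_def
  set f := q.coeff 1 with hf_def
  set g := q.coeff 0 with hg_def
  have hp0 : p ≠ 0 := fun h => by simp [h] at hp
  have hq0 : q ≠ 0 := fun h => by simp [h] at hq
  have ha : a ≠ 0 := by
    have := Polynomial.leadingCoeff_ne_zero.mpr hp0
    rwa [Polynomial.leadingCoeff, hpnd] at this
  have he : e ≠ 0 := by
    have := Polynomial.leadingCoeff_ne_zero.mpr hq0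
    rwa [Polynomial.leadingCoeff, hqnd] at this
  -- evaluation formulas
  have hpe : ∀ x : ℂ, Polynomial.aeval x p = (a:ℂ)*x^3 + (b:ℂ)*x^2 + (c:ℂ)*x + (d:ℂ) := by
    intro x
    rw [Polynomial.aeval_eq_sum_range, hpnd]
    simp [Finset.sum_range_succ]
    ring
  have hqe : ∀ x : ℂ, Polynomial.aeval x q = (e:ℂ)*x^2 + (f:ℂ)*x + (g:ℂ) := by
    intro x
    rw [Polynomial.aeval_eq_sum_range, hqnd]
    simp [Finset.sum_range_succ]
    ring
  clear_value a b c d e f g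
  -- the matrix
  refine ⟨!![0, a*e, 0;
             -(a*g), -(a*f), a;
             e*b*g - a*f*g - e^2*d, e*b*f - a*f^2 + a*e*g - e^2*c, a*f - e*b], ?_, ?_⟩
  · -- irreducibility of the characteristic polynomial
    have hchar : Matrix.charpoly
        !![0, a*e, 0;
           -(a*g), -(a*f), a;
           e*b*g - a*f*g - e^2*d, e*b*f - a*f^2 + a*e*g - e^2*c, a*f - e*b] =
        X^3 + C (b*e) * X^2 + C (a*c*e^2) * X + C (a^2*d*e^3) := by
      rw [Matrix.charpoly, Matrix.det_fin_three]
      simp [Matrix.charmatrix_apply, Matrix.diagonal]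
      ring
    rw [hchar]
    set P := p.map (Int.castRingHom ℚ) with hP_def
    have hPnd : P.natDegree = 3 := by
      rw [hP_def, Polynomial.natDegree_map_eq_of_injective Int.cast_injective]
      exact hpnd
    have hPexp : P = C (a:ℚ) * X^3 + C (b:ℚ) * X^2 + C (c:ℚ) * X + C (d:ℚ) := by
      conv_lhs => rw [P.as_sum_range_C_mul_X_pow, hPnd]
      simp [Finset.sum_range_succ, hP_def, Polynomial.coeff_map,
        ha_def, hb_def, hc_def, hd_def]
      ring
    have haQ : (a:ℚ) ≠ 0 := Int.cast_ne_zero.mpr ha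
    have heQ : (e:ℚ) ≠ 0 := Int.cast_ne_zero.mpr he
    set r : ℚ := ((a:ℚ)*(e:ℚ))⁻¹ with hr_def
    have hr : r ≠ 0 := by
      simp [hr_def, haQ, heQ]
    haveI : Invertible r := invertibleOfNonzero hr
    set φ := Polynomial.algEquivCMulXAddC r (0:ℚ) with hφ_def
    have hφP : Irreducible (φ P) := hirr.map φ
    have key : (X^3 + C (b*e) * X^2 + C (a*c*e^2) * X + C (a^2*d*e^3) : ℤ[X]).map
        (Int.castRingHom ℚ) = C ((a:ℚ)^2*(e:ℚ)^3) * φ P := by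
      apply Polynomial.funext
      intro x
      rw [hφ_def, Polynomial.algEquivCMulXAddC_apply, hPexp]
      simp only [_root_.map_add, _root_.map_mul, _root_.map_pow, Polynomial.aeval_C, Polynomial.aeval_X,
        Polynomial.map_add, Polynomial.map_mul, Polynomial.map_pow, Polynomial.map_C,
        Polynomial.map_X, Polynomial.eval_add, Polynomial.eval_mul, Polynomial.eval_pow,
        Polynomial.eval_C, Polynomial.eval_X, algebraMap_eq, Int.coe_castRingHom]
      have hae : ((a:ℚ)*(e:ℚ)) * r = 1 := mul_inv_cancel₀ (mul_ne_zero haQ heQ)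
      linear_combination (-(x^3*(((a:ℚ)*(e:ℚ)*r)^2 + (a:ℚ)*(e:ℚ)*r + 1) +
        (b:ℚ)*(e:ℚ)*x^2*((a:ℚ)*(e:ℚ)*r + 1) + (a:ℚ)*(c:ℚ)*(e:ℚ)^2*x)) * hae
    rw [key]
    have hu : IsUnit (C ((a:ℚ)^2*(e:ℚ)^3)) :=
      Polynomial.isUnit_C.mpr
        (mul_ne_zero (pow_ne_zero 2 haQ) (pow_ne_zero 3 heQ)).isUnit
    exact (((associated_isUnit_mul_left_iff hu).mpr (Associated.refl (φ P))).symm).irreducible hφP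
  · -- eigenvector property
    intro τ hτ
    have hpτ : (a:ℂ)*τ^3 + (b:ℂ)*τ^2 + (c:ℂ)*τ + (d:ℂ) = 0 := by
      simp only [Set.mem_insert_iff, Set.mem_singleton_iff] at hτ
      rcases hτ with rfl | rfl | rfl
      · rw [← hpe τ]; exact hα
      · rw [← hpe τ]; exact hβ
      · rw [← hpe τ]; exact hγ
    constructor
    · intro h
      have h0 := congrFun h 0
      simp at h0
    · refine ⟨(a:ℂ)*(e:ℂ)*τ, ?_⟩
      have hqτ : Polynomial.aeval τ q = (e:ℂ)*τ^2 + (f:ℂ)*τ + (g:ℂ) := hqe τ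
      funext i
      fin_cases i
      · simp [Matrix.mulVec, dotProduct, Fin.sum_univ_three, Matrix.map_apply]
      · simp [Matrix.mulVec, dotProduct, Fin.sum_univ_three, Matrix.map_apply]
        linear_combination (a:ℂ) * hqτ
      · simp [Matrix.mulVec, dotProduct, Fin.sum_univ_three, Matrix.map_apply]
        linear_combination ((a:ℂ)*(f:ℂ) - (e:ℂ)*(b:ℂ) - (a:ℂ)*(e:ℂ)*τ) * hqτ - (e:ℂ)^2 * hpτ
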